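/- arXiv:1204.4431 — 2 statements merged into one kernel-verified Lean document; each statement's English description precedes it below -/
import Mathlib

section
/- For fully random hash functions h₁, h₂ : S → [m] with m = (1+ε)n and |S| = n, the probability that there exists T ⊆ S such that G(T, h₁, h₂) is an excess-(s+1) core graph is O(1/n^{s+1}); the bound follows from the estimate Σ_{t=s+3}^{n} C(n,t) · 2^{s+1} · m^{t-s-1} · t! · t^{O(s)} / m^{2t} = O(1/n^{s+1}). -/
namespace CuckooStash

variable {V E : Type*} [Fintype V] [DecidableEq V] [Fintype E] [DecidableEq E]

/-- Adjacency relation induced by the edges in `F` of a multigraph with endpoint map `ends`. -/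
def adjOn (ends : E → V × V) (F : Finset E) (u v : V) : Prop :=
  ∃ e ∈ F, ends e = (u, v) ∨ ends e = (v, u)

/-- The setoid whose classes are the connected components (isolated vertices form
    their own components). -/
def compSetoid (ends : E → V × V) (F : Finset E) : Setoid V :=
  Relation.EqvGen.setoid (adjOn ends F)

/-- The number of connected components (isolated vertices count as components). -/
noncomputable def zeta (ends : E → V × V) (F : Finset E) : ℕ :=
  Nat.card (Quotient (compSetoid ends F))

/-- The cyclomatic number `γ = m - n + ζ`. -/
noncomputable def gamma (ends : E → V × V) (F : Finset E) : ℕ :=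
  F.card + zeta ends F - Fintype.card V

open Classical in
/-- The degree of a vertex (a self-loop counts twice). -/
noncomputable def deg (ends : E → V × V) (F : Finset E) (v : V) : ℕ :=
  (F.filter (fun e => (ends e).1 = v)).card + (F.filter (fun e => (ends e).2 = v)).card

open Classical in
/-- The vertex set of the connected component of `v`. -/
noncomputable def compVerts (ends : E → V × V) (F : Finset E) (v : V) : Finset V :=
  Finset.univ.filter (fun u => Relation.EqvGen (adjOn ends F) v u)

open Classical in
/-- The edge set of the connected component of `v`. -/
noncomputable def compEdges (ends : E → V × V) (F : Finset E) (v : V) : Finset E :=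
  F.filter (fun e => Relation.EqvGen (adjOn ends F) v (ends e).1)

/-- Every connected component is acyclic or unicyclic. -/
def GoodComponents (ends : E → V × V) (F : Finset E) : Prop :=
  ∀ v, (compEdges ends F v).card ≤ (compVerts ends F v).card

/-- The excess: the minimum number of edges one has to remove from `F` so that all
    connected components of the remaining graph are acyclic or unicyclic. -/
noncomputable def excess (ends : E → V × V) (F : Finset E) : ℕ :=
  sInf {d : ℕ | ∃ F' ⊆ F, F'.card + d = F.card ∧ GoodComponents ends F'}

/-- The number of connected components that contain a cycle. -/
noncomputable def zetaCyc (ends : E → V × V) (F : Finset E) : ℕ :=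
  Nat.card {c : Quotient (compSetoid ends F) //
    ∃ v, Quotient.mk (compSetoid ends F) v = c ∧
      (compVerts ends F v).card ≤ (compEdges ends F v).card}

/-- A graph is acyclic iff every edge is a bridge. -/
def Acyclic (ends : E → V × V) (F : Finset E) : Prop :=
  ∀ e ∈ F, zeta ends (F.erase e) = zeta ends F + 1

/-- `e` is a cycle edge of `F`: removing it does not disconnect anything. -/
def CycleEdge (ends : E → V × V) (F : Finset E) (e : E) : Prop :=
  e ∈ F ∧ zeta ends (F.erase e) = zeta ends F

end CuckooStash

namespace CuckooStash

/-- `G` restricted to the edge set `F` is an excess-`(s+1)` core graph: it is leafless,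
has excess exactly `s+1`, and every connected component (of a non-isolated vertex)
has cyclomatic number at least 2. -/
def CoreGraph {V E : Type*} [Fintype V] [DecidableEq V] [Fintype E] [DecidableEq E]
    (ends : E → V × V) (F : Finset E) (s : ℕ) : Prop :=
  (∀ v, deg ends F v ≠ 1) ∧ excess ends F = s + 1 ∧
    (∀ v, deg ends F v ≠ 0 →
      (compVerts ends F v).card + 1 ≤ (compEdges ends F v).card)

end CuckooStash

open CuckooStash

set_option linter.unusedSectionVars false

namespace CuckooStash

variable {V E : Type*} [Fintype V] [DecidableEq V] [Fintype E] [DecidableEq E]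

variable (ends : E → V × V)

private lemma adjOn_symm (F : Finset E) : Symmetric (adjOn ends F) := by
  rintro u v ⟨e, he, h | h⟩
  · exact ⟨e, he, Or.inr h⟩
  · exact ⟨e, he, Or.inl h⟩

private lemma eqvGen_iff_rtg {F : Finset E} {u w : V} :
    Relation.EqvGen (adjOn ends F) u w ↔ Relation.ReflTransGen (adjOn ends F) u w := by
  constructor
  · intro h
    induction h with
    | rel x y h => exact Relation.ReflTransGen.single h
    | refl x => exact Relation.ReflTransGen.refl
    | symm x y h ih => exact (@Relation.ReflTransGen.stdSymm _ (adjOn ends F) ⟨fun a b h => adjOn_symm ends F h⟩).symm _ _ ih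
    | trans x y z h1 h2 ih1 ih2 => exact ih1.trans ih2
  · intro h
    induction h with
    | refl => exact Relation.EqvGen.refl _
    | tail hp hs ih => exact Relation.EqvGen.trans _ _ _ ih (Relation.EqvGen.rel _ _ hs)

private lemma eqvGen_mono {F₁ F₂ : Finset E} (hF : F₁ ⊆ F₂) {u w : V}
    (h : Relation.EqvGen (adjOn ends F₁) u w) : Relation.EqvGen (adjOn ends F₂) u w := by
  refine Relation.EqvGen.mono ?_ _ _ h
  rintro a b ⟨e, he, h⟩; exact ⟨e, hF he, h⟩

private lemma reach_endpoint {F : Finset E} {u w : V}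
    (h : Relation.EqvGen (adjOn ends F) u w) :
    u = w ∨ ((∃ e ∈ F, (ends e).1 = w ∨ (ends e).2 = w) ∧
             (∃ e ∈ F, (ends e).1 = u ∨ (ends e).2 = u)) := by
  induction h with
  | rel x y h =>
    obtain ⟨e, he, h | h⟩ := h
    · exact Or.inr ⟨⟨e, he, Or.inr (by rw [h])⟩, ⟨e, he, Or.inl (by rw [h])⟩⟩
    · exact Or.inr ⟨⟨e, he, Or.inl (by rw [h])⟩, ⟨e, he, Or.inr (by rw [h])⟩⟩
  | refl x => exact Or.inl rfl
  | symm x y h ih =>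
    rcases ih with h | ⟨h1, h2⟩
    · exact Or.inl h.symm
    · exact Or.inr ⟨h2, h1⟩
  | trans x y z h1 h2 ih1 ih2 =>
    rcases ih1 with rfl | ⟨hy, hx⟩
    · exact ih2
    · rcases ih2 with rfl | ⟨hz, hy'⟩
      · exact Or.inr ⟨hy, hx⟩
      · exact Or.inr ⟨hz, hx⟩

private lemma mem_compVerts {F : Finset E} {v u : V} :
    u ∈ compVerts ends F v ↔ Relation.EqvGen (adjOn ends F) v u := by
  simp [compVerts]

private lemma mem_compEdges {F : Finset E} {v : V} {e : E} :
    e ∈ compEdges ends F v ↔ e ∈ F ∧ Relation.EqvGen (adjOn ends F) v (ends e).1 := by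
  simp [compEdges]

private lemma transfer {F : Finset E} {v₀ u w : V}
    (hu : ¬ Relation.EqvGen (adjOn ends F) v₀ u)
    (h : Relation.ReflTransGen (adjOn ends F) u w) :
    Relation.ReflTransGen (adjOn ends (F \ compEdges ends F v₀)) u w := by
  induction h with
  | refl => exact Relation.ReflTransGen.refl
  | @tail b c hp hs ih =>
    have hub : Relation.EqvGen (adjOn ends F) u b := (eqvGen_iff_rtg ends).2 hp
    have hb : ¬ Relation.EqvGen (adjOn ends F) v₀ b := fun hvb =>
      hu (Relation.EqvGen.trans _ _ _ hvb (Relation.EqvGen.symm _ _ hub))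
    obtain ⟨e, he, hor⟩ := hs
    have hnotCE : e ∉ compEdges ends F v₀ := by
      intro hce
      rcases (mem_compEdges ends).1 hce with ⟨-, h1⟩
      rcases hor with h2 | h2
      · apply hb; rw [h2] at h1; exact h1
      · apply hb
        refine Relation.EqvGen.trans _ _ _ ?_ (Relation.EqvGen.rel _ _ ⟨e, he, Or.inl h2⟩)
        rw [h2] at h1; exact h1
    exact ih.tail ⟨e, Finset.mem_sdiff.2 ⟨he, hnotCE⟩, hor⟩

private lemma compVerts_sdiff {F : Finset E} {v₀ u : V}
    (hu : ¬ Relation.EqvGen (adjOn ends F) v₀ u) :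
    compVerts ends (F \ compEdges ends F v₀) u = compVerts ends F u := by
  ext w
  simp only [mem_compVerts]
  constructor
  · exact fun h => eqvGen_mono ends Finset.sdiff_subset h
  · intro h
    exact (eqvGen_iff_rtg ends).2 (transfer ends hu ((eqvGen_iff_rtg ends).1 h))

private lemma compEdges_sdiff {F : Finset E} {v₀ u : V}
    (hu : ¬ Relation.EqvGen (adjOn ends F) v₀ u) :
    compEdges ends (F \ compEdges ends F v₀) u = compEdges ends F u := by
  ext e
  simp only [mem_compEdges, Finset.mem_sdiff]
  constructor
  · rintro ⟨⟨he, -⟩, hreach⟩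
    exact ⟨he, eqvGen_mono ends Finset.sdiff_subset hreach⟩
  · rintro ⟨he, hreach⟩
    have hnot : e ∉ compEdges ends F v₀ := by
      intro hce
      rcases (mem_compEdges ends).1 hce with ⟨-, h1⟩
      exact hu (Relation.EqvGen.trans _ _ _ h1 (Relation.EqvGen.symm _ _ hreach))
    exact ⟨⟨he, fun hc => hnot ((mem_compEdges ends).2 hc)⟩,
      (eqvGen_iff_rtg ends).2 (transfer ends hu ((eqvGen_iff_rtg ends).1 hreach))⟩

private lemma compEdges_sdiff_empty {F : Finset E} {v₀ u : V}
    (hu : Relation.EqvGen (adjOn ends F) v₀ u) :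
    compEdges ends (F \ compEdges ends F v₀) u = ∅ := by
  rw [Finset.eq_empty_iff_forall_notMem]
  intro e he
  rcases (mem_compEdges ends).1 he with ⟨hmem, hreach⟩
  rcases Finset.mem_sdiff.1 hmem with ⟨heF, hnot⟩
  exact hnot ((mem_compEdges ends).2
    ⟨heF, Relation.EqvGen.trans _ _ _ hu (eqvGen_mono ends Finset.sdiff_subset hreach)⟩)

private lemma deg_ne_zero_iff {F : Finset E} {v : V} :
    deg ends F v ≠ 0 ↔ ∃ e ∈ F, (ends e).1 = v ∨ (ends e).2 = v := by
  classical
  unfold deg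
  constructor
  · intro h
    by_contra hc
    push_neg at hc
    apply h
    have h1 : F.filter (fun e => (ends e).1 = v) = ∅ :=
      Finset.filter_false_of_mem (fun e he h1 => (hc e he).1 h1)
    have h2 : F.filter (fun e => (ends e).2 = v) = ∅ :=
      Finset.filter_false_of_mem (fun e he h2 => (hc e he).2 h2)
    rw [h1, h2]
    rfl
  · rintro ⟨e, he, h | h⟩ hdeg
    · have hm : e ∈ F.filter (fun e => (ends e).1 = v) := Finset.mem_filter.2 ⟨he, h⟩
      have := Finset.card_pos.2 ⟨e, hm⟩
      omega
    · have hm : e ∈ F.filter (fun e => (ends e).2 = v) := Finset.mem_filter.2 ⟨he, h⟩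
      have := Finset.card_pos.2 ⟨e, hm⟩
      omega

private lemma deg_ne_zero_mono {F₁ F₂ : Finset E} (h : F₁ ⊆ F₂) {v : V}
    (hv : deg ends F₁ v ≠ 0) : deg ends F₂ v ≠ 0 := by
  rcases (deg_ne_zero_iff ends).1 hv with ⟨e, he, hor⟩
  exact (deg_ne_zero_iff ends).2 ⟨e, h he, hor⟩

private lemma good_card_le : ∀ (N : ℕ) (F : Finset E), F.card ≤ N →
    GoodComponents ends F →
    F.card ≤ (Finset.univ.filter (fun v => deg ends F v ≠ 0)).card := by
  intro N
  induction N with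
  | zero =>
    intro F hF _
    simp [Finset.card_eq_zero.1 (Nat.le_zero.1 hF)]
  | succ N ih =>
    intro F hF hGood
    rcases Finset.eq_empty_or_nonempty F with rfl | ⟨e₀, he₀⟩
    · simp
    set v₀ := (ends e₀).1 with hv₀
    set CE := compEdges ends F v₀ with hCE
    have he₀CE : e₀ ∈ CE := (mem_compEdges ends).2 ⟨he₀, Relation.EqvGen.refl v₀⟩
    have hCEsub : CE ⊆ F := fun e he => ((mem_compEdges ends).1 he).1
    have hcard : (F \ CE).card + CE.card = F.card := Finset.card_sdiff_add_card_eq_card hCEsub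
    have hCEpos : 0 < CE.card := Finset.card_pos.2 ⟨e₀, he₀CE⟩
    have hlt : (F \ CE).card ≤ N := by omega
    have hGood₂ : GoodComponents ends (F \ CE) := by
      intro u
      by_cases hu : Relation.EqvGen (adjOn ends F) v₀ u
      · rw [compEdges_sdiff_empty ends hu]
        simp
      · rw [compEdges_sdiff ends hu, compVerts_sdiff ends hu]
        exact hGood u
    have hIH := ih (F \ CE) hlt hGood₂
    have hsub1 : compVerts ends F v₀ ⊆ Finset.univ.filter (fun v => deg ends F v ≠ 0) := by
      intro w hw
      have h := (mem_compVerts ends).1 hw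
      refine Finset.mem_filter.2 ⟨Finset.mem_univ _, ?_⟩
      rcases reach_endpoint ends h with rfl | ⟨h1, -⟩
      · exact (deg_ne_zero_iff ends).2 ⟨e₀, he₀, Or.inl rfl⟩
      · exact (deg_ne_zero_iff ends).2 h1
    have hsub2 : Finset.univ.filter (fun v => deg ends (F \ CE) v ≠ 0) ⊆
        Finset.univ.filter (fun v => deg ends F v ≠ 0) := by
      intro w hw
      exact Finset.mem_filter.2 ⟨Finset.mem_univ _,
        deg_ne_zero_mono ends Finset.sdiff_subset (Finset.mem_filter.1 hw).2⟩
    have hdisj : Disjoint (compVerts ends F v₀)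
        (Finset.univ.filter (fun v => deg ends (F \ CE) v ≠ 0)) := by
      rw [Finset.disjoint_left]
      intro u hu hu2
      have hreach := (mem_compVerts ends).1 hu
      rcases (deg_ne_zero_iff ends).1 (Finset.mem_filter.1 hu2).2 with ⟨e, he, hor⟩
      rcases Finset.mem_sdiff.1 he with ⟨heF, hnCE⟩
      apply hnCE
      rcases hor with h1 | h2
      · exact (mem_compEdges ends).2 ⟨heF, by rw [h1]; exact hreach⟩
      · refine (mem_compEdges ends).2 ⟨heF, ?_⟩
        have h2' : Relation.EqvGen (adjOn ends F) v₀ (ends e).2 := by rw [h2]; exact hreach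
        refine Relation.EqvGen.trans _ _ _ h2' ?_
        refine Relation.EqvGen.symm _ _ (Relation.EqvGen.rel _ _ ⟨e, heF, Or.inl ?_⟩)
        exact Prod.mk.eta.symm
    have hunion := Finset.card_union_of_disjoint hdisj
    have hle : (compVerts ends F v₀).card
        + (Finset.univ.filter (fun v => deg ends (F \ CE) v ≠ 0)).card
        ≤ (Finset.univ.filter (fun v => deg ends F v ≠ 0)).card := by
      rw [← hunion]
      exact Finset.card_le_card (Finset.union_subset hsub1 hsub2)
    have hCEle : CE.card ≤ (compVerts ends F v₀).card := hGood v₀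
    omega

private lemma exists_good_spanning (F : Finset E)
    (hleaf : ∀ v, deg ends F v ≠ 1) :
    ∃ F' ⊆ F, GoodComponents ends F' ∧
      F'.card = (Finset.univ.filter (fun v => deg ends F v ≠ 0)).card := by
  classical
  set V₀ := Finset.univ.filter (fun v => deg ends F v ≠ 0) with hV₀
  set tmap : {v // v ∈ V₀} → Finset E :=
    fun u => F.filter (fun e => (ends e).1 = u.val ∨ (ends e).2 = u.val) with htmap
  have hHall : ∀ s : Finset {v // v ∈ V₀}, s.card ≤ (s.biUnion tmap).card := by
    intro s
    have h2 : ∀ u ∈ s, 2 ≤ deg ends F u.val := by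
      intro u hu
      have h0 : deg ends F u.val ≠ 0 := (Finset.mem_filter.1 u.prop).2
      have h1 := hleaf u.val
      omega
    have hsum : 2 * s.card ≤ ∑ u ∈ s, deg ends F u.val := by
      calc 2 * s.card = ∑ _u ∈ s, 2 := by rw [Finset.sum_const, smul_eq_mul, mul_comm]
      _ ≤ _ := Finset.sum_le_sum h2
    have hswap : ∑ u ∈ s, deg ends F u.val ≤ 2 * (s.biUnion tmap).card := by
      have expand : ∀ u : {v // v ∈ V₀}, deg ends F u.val =
          ∑ e ∈ F, ((if (ends e).1 = u.val then 1 else 0) +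
            (if (ends e).2 = u.val then 1 else 0)) := by
        intro u
        unfold deg
        rw [Finset.sum_add_distrib, ← Finset.card_filter, ← Finset.card_filter]
      calc ∑ u ∈ s, deg ends F u.val
          = ∑ e ∈ F, ∑ u ∈ s, ((if (ends e).1 = u.val then 1 else 0) +
              (if (ends e).2 = u.val then 1 else 0)) := by
            rw [← Finset.sum_comm]
            exact Finset.sum_congr rfl (fun u _ => expand u)
        _ ≤ ∑ e ∈ F, (if e ∈ s.biUnion tmap then 2 else 0) := by
            apply Finset.sum_le_sum
            intro e heF
            have key : ∀ x : V, (∑ u ∈ s, if x = u.val then 1 else 0) ≤ 1 := by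
              intro x
              rw [← Finset.card_filter]
              refine Finset.card_le_one.2 ?_
              intro u1 h1 u2 h2
              exact Subtype.ext ((Finset.mem_filter.1 h1).2.symm.trans (Finset.mem_filter.1 h2).2)
            by_cases hmem : e ∈ s.biUnion tmap
            · rw [if_pos hmem, Finset.sum_add_distrib]
              have k1 := key (ends e).1
              have k2 := key (ends e).2
              have e1 : (∑ u ∈ s, if (ends e).1 = u.val then 1 else 0) ≤ 1 := k1
              have e2 : (∑ u ∈ s, if (ends e).2 = u.val then 1 else 0) ≤ 1 := k2
              omega
            · rw [if_neg hmem]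
              refine le_of_eq (Finset.sum_eq_zero ?_)
              intro u hu
              have hn : ¬((ends e).1 = u.val ∨ (ends e).2 = u.val) := by
                intro hor
                exact hmem (Finset.mem_biUnion.2 ⟨u, hu, Finset.mem_filter.2 ⟨heF, hor⟩⟩)
              push_neg at hn
              rw [if_neg hn.1, if_neg hn.2]
              rfl
        _ ≤ 2 * (s.biUnion tmap).card := by
            rw [Finset.sum_ite_mem]
            rw [Finset.sum_const, smul_eq_mul]
            have : (F ∩ s.biUnion tmap).card ≤ (s.biUnion tmap).card :=
              Finset.card_le_card (Finset.inter_subset_right)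
            omega
    omega
  obtain ⟨f, hfinj, hfmem⟩ := (Finset.all_card_le_biUnion_card_iff_exists_injective tmap).1 hHall
  refine ⟨Finset.univ.image f, ?_, ?_, ?_⟩
  · intro e he
    rcases Finset.mem_image.1 he with ⟨u, -, rfl⟩
    exact (Finset.mem_filter.1 (hfmem u)).1
  · intro w
    have hsel : ∀ e ∈ compEdges ends (Finset.univ.image f) w, ∃ u : {v // v ∈ V₀}, f u = e := by
      intro e he
      rcases Finset.mem_image.1 (((mem_compEdges ends).1 he).1) with ⟨u, -, hu⟩
      exact ⟨u, hu⟩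
    refine Finset.card_le_card_of_injOn
      (fun e => if h : ∃ u : {v // v ∈ V₀}, f u = e then (h.choose).val else w) ?_ ?_
    · intro e he
      have hex : ∃ u, f u = e := hsel e he
      rcases (mem_compEdges ends).1 he with ⟨heF', hreach⟩
      simp only [dif_pos hex]
      have hinc := hfmem hex.choose
      rw [hex.choose_spec] at hinc
      refine (mem_compVerts ends).2 ?_
      rcases (Finset.mem_filter.1 hinc).2 with h1 | h2
      · rw [← h1]; exact hreach
      · rw [← h2]
        refine Relation.EqvGen.trans _ _ _ hreach (Relation.EqvGen.rel _ _ ⟨e, heF', Or.inl ?_⟩)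
        exact Prod.mk.eta.symm
    · intro e1 h1 e2 h2 heq
      have hx1 : ∃ u, f u = e1 := hsel e1 h1
      have hx2 : ∃ u, f u = e2 := hsel e2 h2
      simp only [dif_pos hx1, dif_pos hx2] at heq
      rw [← hx1.choose_spec, ← hx2.choose_spec, Subtype.ext heq]
  · rw [Finset.card_image_of_injective _ hfinj, Finset.card_univ, Fintype.card_coe]

end CuckooStash

namespace CuckooStash

variable {V E : Type*} [Fintype V] [DecidableEq V] [Fintype E] [DecidableEq E]

variable (ends : E → V × V)

lemma coreGraph_vertex_count {F : Finset E} {s : ℕ}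
    (hleaf : ∀ v, deg ends F v ≠ 1) (hexc : excess ends F = s + 1) :
    (Finset.univ.filter (fun v => deg ends F v ≠ 0)).card + (s + 1) = F.card := by
  classical
  obtain ⟨F', hsub, hgood, hcardF'⟩ := exists_good_spanning ends F hleaf
  have hle : F'.card ≤ F.card := Finset.card_le_card hsub
  have hmem : (F.card - F'.card) ∈
      {d : ℕ | ∃ F'' ⊆ F, F''.card + d = F.card ∧ GoodComponents ends F''} :=
    ⟨F', hsub, by omega, hgood⟩
  have h1 : excess ends F ≤ F.card - F'.card := Nat.sInf_le hmem
  have hne : {d : ℕ | ∃ F'' ⊆ F, F''.card + d = F.card ∧ GoodComponents ends F''}.Nonempty := by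
    refine ⟨F.card, ∅, Finset.empty_subset _, by simp, ?_⟩
    intro v
    have : compEdges ends (∅ : Finset E) v = ∅ := by
      rw [Finset.eq_empty_iff_forall_notMem]
      intro e he
      exact absurd ((mem_compEdges ends).1 he).1 (Finset.notMem_empty e)
    rw [this]
    simp
  have h2 : excess ends F ∈
      {d : ℕ | ∃ F'' ⊆ F, F''.card + d = F.card ∧ GoodComponents ends F''} :=
    Nat.sInf_mem hne
  rw [hexc] at h1 h2
  obtain ⟨F₂, hsub2, hcard2, hgood2⟩ := h2
  have h3 : F₂.card ≤ (Finset.univ.filter (fun v => deg ends F v ≠ 0)).card := by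
    refine le_trans (good_card_le ends F₂.card F₂ le_rfl hgood2) ?_
    refine Finset.card_le_card ?_
    intro v hv
    exact Finset.mem_filter.2 ⟨Finset.mem_univ _,
      deg_ne_zero_mono ends hsub2 (Finset.mem_filter.1 hv).2⟩
  omega

end CuckooStash

namespace CuckooStash

open Finset

lemma filter_sum_card {α β : Type*} [Fintype α] [Fintype β] (P : α ⊕ β → Prop)
    [DecidablePred P] :
    ((Finset.univ : Finset (α ⊕ β)).filter P).card =
      (Finset.univ.filter (fun a => P (Sum.inl a))).card +
      (Finset.univ.filter (fun b => P (Sum.inr b))).card := by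
  rw [← Finset.univ_disjSum_univ]
  have h : (Finset.univ.disjSum Finset.univ).filter P =
      (Finset.univ.filter (fun a => P (Sum.inl a))).disjSum
        (Finset.univ.filter (fun b => P (Sum.inr b))) := by
    ext x
    cases x <;> simp
  rw [h, Finset.card_disjSum]

variable {n m : ℕ}

abbrev ends2 (hh : (Fin n → Fin m) × (Fin n → Fin m)) :
    Fin n → (Fin m ⊕ Fin m) × (Fin m ⊕ Fin m) :=
  fun x => (Sum.inl (hh.1 x), Sum.inr (hh.2 x))

lemma deg2_inl (hh : (Fin n → Fin m) × (Fin n → Fin m)) (T : Finset (Fin n)) (v : Fin m) :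
    deg (ends2 hh) T (Sum.inl v) = (T.filter (fun x => hh.1 x = v)).card := by
  classical
  unfold deg
  have h1 : T.filter (fun e => ((ends2 hh e).1 = Sum.inl v)) = T.filter (fun x => hh.1 x = v) :=
    Finset.filter_congr (fun x _ => by simp)
  have h2 : T.filter (fun e => ((ends2 hh e).2 = Sum.inl v)) = ∅ :=
    Finset.filter_false_of_mem (fun e _ h => by simp at h)
  rw [h1, h2, Finset.card_empty, Nat.add_zero]

lemma deg2_inr (hh : (Fin n → Fin m) × (Fin n → Fin m)) (T : Finset (Fin n)) (v : Fin m) :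
    deg (ends2 hh) T (Sum.inr v) = (T.filter (fun x => hh.2 x = v)).card := by
  classical
  unfold deg
  have h1 : T.filter (fun e => ((ends2 hh e).2 = Sum.inr v)) = T.filter (fun x => hh.2 x = v) :=
    Finset.filter_congr (fun x _ => by simp)
  have h2 : T.filter (fun e => ((ends2 hh e).1 = Sum.inr v)) = ∅ :=
    Finset.filter_false_of_mem (fun e _ h => by simp at h)
  rw [h1, h2, Finset.card_empty, Nat.zero_add]

lemma image_eq_deg_filter (g : Fin n → Fin m) (T : Finset (Fin n)) :
    Finset.univ.filter (fun v => (T.filter (fun x => g x = v)).card ≠ 0) = T.image g := by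
  ext v
  simp only [Finset.mem_filter, Finset.mem_univ, true_and, Finset.card_ne_zero]
  rw [Finset.filter_nonempty_iff]
  exact (Finset.mem_image).symm

lemma core_structure {s : ℕ} (hh : (Fin n → Fin m) × (Fin n → Fin m)) (T : Finset (Fin n))
    (h : CoreGraph (ends2 hh) T s) :
    (∀ v ∈ T.image hh.1, 2 ≤ (T.filter (fun x => hh.1 x = v)).card) ∧
    (∀ v ∈ T.image hh.2, 2 ≤ (T.filter (fun x => hh.2 x = v)).card) ∧
    (T.image hh.1).card + (T.image hh.2).card + (s + 1) = T.card := by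
  classical
  obtain ⟨hleaf, hexc, -⟩ := h
  refine ⟨?_, ?_, ?_⟩
  · intro v hv
    have h1 := hleaf (Sum.inl v)
    rw [deg2_inl] at h1
    rcases Finset.mem_image.1 hv with ⟨x, hxT, hxv⟩
    have : x ∈ T.filter (fun x => hh.1 x = v) := Finset.mem_filter.2 ⟨hxT, hxv⟩
    have := Finset.card_pos.2 ⟨x, this⟩
    omega
  · intro v hv
    have h1 := hleaf (Sum.inr v)
    rw [deg2_inr] at h1
    rcases Finset.mem_image.1 hv with ⟨x, hxT, hxv⟩
    have : x ∈ T.filter (fun x => hh.2 x = v) := Finset.mem_filter.2 ⟨hxT, hxv⟩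
    have := Finset.card_pos.2 ⟨x, this⟩
    omega
  · have hcount := coreGraph_vertex_count (ends2 hh) hleaf hexc
    rw [filter_sum_card] at hcount
    have e1 : Finset.univ.filter (fun a => deg (ends2 hh) T (Sum.inl a) ≠ 0) = T.image hh.1 := by
      rw [← image_eq_deg_filter hh.1 T]
      exact Finset.filter_congr (fun v _ => by rw [deg2_inl])
    have e2 : Finset.univ.filter (fun b => deg (ends2 hh) T (Sum.inr b) ≠ 0) = T.image hh.2 := by
      rw [← image_eq_deg_filter hh.2 T]
      exact Finset.filter_congr (fun v _ => by rw [deg2_inr])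
    rw [e1, e2] at hcount
    exact hcount

end CuckooStash

namespace CuckooStash

open Finset

/-- product of `a` successive "choose a pair" counts -/
def Dp : ℕ → ℕ → ℕ
  | _, 0 => 1
  | u, a + 1 => u.choose 2 * Dp (u - 2) a

lemma dp_mul_le_factorial : ∀ (a u : ℕ), Dp u a * 2 ^ a * (u - 2 * a).factorial ≤ u.factorial := by
  intro a
  induction a with
  | zero => intro u; simp [Dp]
  | succ a ih =>
    intro u
    rcases Nat.lt_or_ge u 2 with hu | hu
    · have h0 : u.choose 2 = 0 := Nat.choose_eq_zero_of_lt hu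
      simp [Dp, h0]
    · have h1 : Dp u (a + 1) * 2 ^ (a + 1) * (u - 2 * (a + 1)).factorial
          = (u.choose 2 * 2) * (Dp (u - 2) a * 2 ^ a * ((u - 2) - 2 * a).factorial) := by
        have : u - 2 * (a + 1) = (u - 2) - 2 * a := by omega
        rw [this, Dp]
        ring
      rw [h1]
      have h2 : u.choose 2 * 2 ≤ u * (u - 1) := by
        rw [Nat.choose_two_right]
        exact Nat.div_mul_le_self _ 2
      have h3 := ih (u - 2)
      calc (u.choose 2 * 2) * (Dp (u - 2) a * 2 ^ a * ((u - 2) - 2 * a).factorial)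
          ≤ (u * (u - 1)) * (u - 2).factorial := Nat.mul_le_mul h2 h3
        _ = u.factorial := by
            obtain ⟨k, rfl⟩ : ∃ k, u = k + 2 := ⟨u - 2, by omega⟩
            show (k + 2) * (k + 1) * k.factorial = (k + 2).factorial
            rw [Nat.factorial_succ, Nat.factorial_succ]
            ring
  
lemma dp_eq_zero {u a : ℕ} (h : u < 2 * a) : Dp u a = 0 := by
  induction a generalizing u with
  | zero => omega
  | succ a ih =>
    rcases Nat.lt_or_ge u 2 with hu | hu
    · rw [Dp, Nat.choose_eq_zero_of_lt hu, Nat.zero_mul]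
    · rw [Dp, ih (by omega), Nat.mul_zero]

variable {n m : ℕ}

/-- the two smallest elements of a finset with at least two elements -/
def pairTwo (fib : Finset (Fin n)) (h : 2 ≤ fib.card) : Finset (Fin n) :=
  have h1 : fib.Nonempty := Finset.card_pos.1 (by omega)
  {fib.min' h1, (fib.erase (fib.min' h1)).min'
    (Finset.card_pos.1 (by rw [Finset.card_erase_of_mem (fib.min'_mem h1)]; omega))}

lemma pairTwo_subset (fib : Finset (Fin n)) (h : 2 ≤ fib.card) : pairTwo fib h ⊆ fib := by
  unfold pairTwo
  intro x hx
  rcases Finset.mem_insert.1 hx with rfl | hx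
  · exact fib.min'_mem _
  · rw [Finset.mem_singleton.1 hx]
    exact Finset.mem_of_mem_erase ((fib.erase _).min'_mem _)

lemma pairTwo_card (fib : Finset (Fin n)) (h : 2 ≤ fib.card) : (pairTwo fib h).card = 2 := by
  unfold pairTwo
  refine Finset.card_pair ?_
  intro hcontra
  have h1 : fib.Nonempty := Finset.card_pos.1 (by omega)
  have := (fib.erase (fib.min' h1)).min'_mem
    (Finset.card_pos.1 (by rw [Finset.card_erase_of_mem (fib.min'_mem h1)]; omega))
  rw [← hcontra] at this
  exact (Finset.notMem_erase _ _) this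

abbrev P1 (T : Finset (Fin n)) (A : Finset (Fin m)) (g : Fin n → Fin m) : Prop :=
  T.image g = A ∧ ∀ v ∈ A, 2 ≤ (T.filter (fun x => g x = v)).card

def phiMap (T : Finset (Fin n)) (A : Finset (Fin m)) (g : Fin n → Fin m) :
    Fin m → Finset (Fin n) :=
  fun v => if h : v ∈ A ∧ 2 ≤ ((T.filter (fun x => g x = v)).card)
    then pairTwo _ h.2 else ∅

def PhiGood (U : Finset (Fin n)) (A : Finset (Fin m)) : Finset (Fin m → Finset (Fin n)) :=
  Finset.univ.filter (fun φ => (∀ v ∈ A, φ v ⊆ U ∧ (φ v).card = 2) ∧ (∀ v ∉ A, φ v = ∅) ∧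
    (∀ v ∈ A, ∀ w ∈ A, v ≠ w → Disjoint (φ v) (φ w)))

lemma phiGood_card : ∀ (A : Finset (Fin m)) (U : Finset (Fin n)),
    (PhiGood U A).card ≤ Dp U.card A.card := by
  intro A
  induction A using Finset.induction_on with
  | empty =>
    intro U
    have : Dp U.card 0 = 1 := rfl
    rw [Finset.card_empty, this]
    refine Finset.card_le_one.2 ?_
    intro φ1 h1 φ2 h2
    have e1 := (Finset.mem_filter.1 h1).2.2.1
    have e2 := (Finset.mem_filter.1 h2).2.2.1
    funext v
    rw [e1 v (Finset.notMem_empty v), e2 v (Finset.notMem_empty v)]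
  | @insert v₀ A hv₀ ih =>
    intro U
    have hmaps : ∀ φ ∈ PhiGood U (insert v₀ A), φ v₀ ∈ U.powersetCard 2 := by
      intro φ hφ
      have h := (Finset.mem_filter.1 hφ).2.1 v₀ (Finset.mem_insert_self _ _)
      exact Finset.mem_powersetCard.2 ⟨h.1, h.2⟩
    rw [Finset.card_eq_sum_card_fiberwise hmaps]
    have hfiber : ∀ p ∈ U.powersetCard 2,
        ((PhiGood U (insert v₀ A)).filter (fun φ => φ v₀ = p)).card ≤ Dp (U.card - 2) A.card := by
      intro p hp
      rcases Finset.mem_powersetCard.1 hp with ⟨hpU, hpcard⟩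
      refine le_trans ?_ (le_trans (ih (U \ p)) (le_of_eq (by rw [Finset.card_sdiff_of_subset hpU, hpcard])))
      refine Finset.card_le_card_of_injOn (fun φ => Function.update φ v₀ ∅) ?_ ?_
      · intro φ hφ
        dsimp only
        rcases Finset.mem_filter.1 hφ with ⟨hφg, hφp⟩
        rcases Finset.mem_filter.1 hφg with ⟨-, hcond1, hcond2, hcond3⟩
        refine Finset.mem_filter.2 ⟨Finset.mem_univ _, ?_, ?_, ?_⟩
        · intro v hv
          have hne : v ≠ v₀ := fun hc => hv₀ (hc ▸ hv)
          rw [Function.update_of_ne hne]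
          have h1 := hcond1 v (Finset.mem_insert_of_mem hv)
          refine ⟨?_, h1.2⟩
          intro x hx
          rw [Finset.mem_sdiff]
          refine ⟨h1.1 hx, ?_⟩
          have hdisj := hcond3 v (Finset.mem_insert_of_mem hv) v₀ (Finset.mem_insert_self _ _) hne
          rw [← hφp]
          exact Finset.disjoint_left.1 hdisj hx
        · intro v hv
          by_cases hvv : v = v₀
          · rw [hvv, Function.update_self]
          · rw [Function.update_of_ne hvv]
            exact hcond2 v (by simp [Finset.mem_insert, hvv, hv])
        · intro v hv w hw hvw
          have hnev : v ≠ v₀ := fun hc => hv₀ (hc ▸ hv)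
          have hnew : w ≠ v₀ := fun hc => hv₀ (hc ▸ hw)
          rw [Function.update_of_ne hnev, Function.update_of_ne hnew]
          exact hcond3 v (Finset.mem_insert_of_mem hv) w (Finset.mem_insert_of_mem hw) hvw
      · intro φ1 h1 φ2 h2 heq
        dsimp only at heq
        have hp1 := (Finset.mem_filter.1 h1).2
        have hp2 := (Finset.mem_filter.1 h2).2
        funext v
        by_cases hvv : v = v₀
        · rw [hvv, hp1, hp2]
        · have := congrFun heq v
          rwa [Function.update_of_ne hvv, Function.update_of_ne hvv] at this
    calc ∑ p ∈ U.powersetCard 2, ((PhiGood U (insert v₀ A)).filter (fun φ => φ v₀ = p)).card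
        ≤ ∑ _p ∈ U.powersetCard 2, Dp (U.card - 2) A.card := Finset.sum_le_sum hfiber
      _ = U.card.choose 2 * Dp (U.card - 2) A.card := by
          rw [Finset.sum_const, smul_eq_mul, Finset.card_powersetCard]
      _ = Dp U.card (A.card + 1) := rfl
      _ = Dp U.card (insert v₀ A).card := by rw [Finset.card_insert_of_notMem hv₀]

end CuckooStash

namespace CuckooStash

open Finset

variable {n m : ℕ}

lemma phiMap_mem_phiGood {T : Finset (Fin n)} {A : Finset (Fin m)} {g : Fin n → Fin m}
    (hg : P1 T A g) : phiMap T A g ∈ PhiGood T A := by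
  refine Finset.mem_filter.2 ⟨Finset.mem_univ _, ?_, ?_, ?_⟩
  · intro v hv
    have hc : v ∈ A ∧ 2 ≤ ((T.filter (fun x => g x = v)).card) := ⟨hv, hg.2 v hv⟩
    rw [phiMap, dif_pos hc]
    exact ⟨(pairTwo_subset _ hc.2).trans (Finset.filter_subset _ _), pairTwo_card _ hc.2⟩
  · intro v hv
    rw [phiMap, dif_neg (fun hc => hv hc.1)]
  · intro v hv w hw hvw
    have hcv : v ∈ A ∧ 2 ≤ ((T.filter (fun x => g x = v)).card) := ⟨hv, hg.2 v hv⟩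
    have hcw : w ∈ A ∧ 2 ≤ ((T.filter (fun x => g x = w)).card) := ⟨hw, hg.2 w hw⟩
    simp only [phiMap]
    rw [dif_pos hcv, dif_pos hcw]
    rw [Finset.disjoint_left]
    intro x hx1 hx2
    have e1 := (Finset.mem_filter.1 (pairTwo_subset _ hcv.2 hx1)).2
    have e2 := (Finset.mem_filter.1 (pairTwo_subset _ hcw.2 hx2)).2
    exact hvw (e1.symm.trans e2)

lemma phiMap_decode {T : Finset (Fin n)} {A : Finset (Fin m)} {g : Fin n → Fin m}
    (hg : P1 T A g) {v : Fin m} (hv : v ∈ A) {x : Fin n} (hx : x ∈ phiMap T A g v) :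
    g x = v := by
  have hc : v ∈ A ∧ 2 ≤ ((T.filter (fun x => g x = v)).card) := ⟨hv, hg.2 v hv⟩
  rw [phiMap, dif_pos hc] at hx
  exact (Finset.mem_filter.1 (pairTwo_subset _ hc.2 hx)).2

lemma count_P1 (T : Finset (Fin n)) (A : Finset (Fin m)) :
    (Finset.univ.filter (fun g : Fin n → Fin m => P1 T A g)).card ≤
      Dp T.card A.card * A.card ^ (T.card - 2 * A.card) * m ^ (n - T.card) := by
  classical
  have hmaps : ∀ g ∈ Finset.univ.filter (fun g : Fin n → Fin m => P1 T A g),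
      phiMap T A g ∈ PhiGood T A := by
    intro g hg
    exact phiMap_mem_phiGood (Finset.mem_filter.1 hg).2
  rw [Finset.card_eq_sum_card_fiberwise hmaps]
  have hfiber : ∀ φ ∈ PhiGood T A,
      ((Finset.univ.filter (fun g : Fin n → Fin m => P1 T A g)).filter
        (fun g => phiMap T A g = φ)).card ≤
        A.card ^ (T.card - 2 * A.card) * m ^ (n - T.card) := by
    intro φ hφ
    rcases Finset.mem_filter.1 hφ with ⟨-, hφ1, hφ2, hφ3⟩
    set supp := A.biUnion φ with hsupp
    have hsuppT : supp ⊆ T := by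
      intro x hx
      rcases Finset.mem_biUnion.1 hx with ⟨v, hv, hxv⟩
      exact (hφ1 v hv).1 hxv
    have hsuppcard : supp.card = 2 * A.card := by
      rw [hsupp, Finset.card_biUnion hφ3]
      rw [Finset.sum_congr rfl (fun v hv => (hφ1 v hv).2), Finset.sum_const, smul_eq_mul,
        mul_comm]
    have hxmem : ∀ g : Fin n → Fin m, P1 T A g → ∀ x : Fin n, x ∈ T → g x ∈ A := by
      intro g hg x hx
      rw [← hg.1]
      exact Finset.mem_image_of_mem g hx
    -- injection into functions
    refine le_trans (Finset.card_le_card_of_injOn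
      (fun g => ((fun x : {x // x ∈ T \ supp} =>
          (g x.val : Fin m)), (fun x : {x // x ∈ (Tᶜ : Finset (Fin n))} => g x.val)))
      (t := (Fintype.piFinset (fun _ : {x // x ∈ T \ supp} => A)) ×ˢ
        (Finset.univ : Finset ({x // x ∈ (Tᶜ : Finset (Fin n))} → Fin m)))
      ?_ ?_) ?_
    · intro g hg
      rcases Finset.mem_filter.1 (Finset.mem_filter.1 hg).1 with ⟨-, hP⟩
      refine Finset.mem_product.2 ⟨?_, Finset.mem_univ _⟩
      refine Fintype.mem_piFinset.2 ?_
      intro x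
      exact hxmem g hP x.val (Finset.mem_sdiff.1 x.prop).1
    · intro g1 hg1 g2 hg2 heq
      dsimp only at heq
      have hP1 := (Finset.mem_filter.1 (Finset.mem_filter.1 hg1).1).2
      have hP2 := (Finset.mem_filter.1 (Finset.mem_filter.1 hg2).1).2
      have hφg1 := (Finset.mem_filter.1 hg1).2
      have hφg2 := (Finset.mem_filter.1 hg2).2
      have heq1 := congrArg Prod.fst heq
      have heq2 := congrArg Prod.snd heq
      dsimp only at heq1 heq2
      funext x
      by_cases hxT : x ∈ T
      · by_cases hxs : x ∈ supp
        · rcases Finset.mem_biUnion.1 hxs with ⟨v, hv, hxv⟩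
          have d1 : g1 x = v := by
            refine phiMap_decode hP1 hv ?_
            rw [hφg1]; exact hxv
          have d2 : g2 x = v := by
            refine phiMap_decode hP2 hv ?_
            rw [hφg2]; exact hxv
          rw [d1, d2]
        · have hmem : x ∈ T \ supp := Finset.mem_sdiff.2 ⟨hxT, hxs⟩
          exact congrFun heq1 ⟨x, hmem⟩
      · have hmem : x ∈ (Tᶜ : Finset (Fin n)) := Finset.mem_compl.2 hxT
        exact congrFun heq2 ⟨x, hmem⟩
    · -- cardinality of the target
      rw [Finset.card_product, Fintype.card_piFinset]
      have c1 : ∏ _x : {x // x ∈ T \ supp}, A.card = A.card ^ (T.card - 2 * A.card) := by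
        rw [Finset.prod_const, Finset.card_univ, Fintype.card_coe,
          Finset.card_sdiff_of_subset hsuppT, hsuppcard]
      have c2 : (Finset.univ : Finset ({x // x ∈ (Tᶜ : Finset (Fin n))} → Fin m)).card
          = m ^ (n - T.card) := by
        rw [Finset.card_univ, Fintype.card_fun, Fintype.card_coe, Finset.card_compl,
          Fintype.card_fin, Fintype.card_fin]
      rw [c1, c2]
  calc ∑ φ ∈ PhiGood T A, ((Finset.univ.filter (fun g : Fin n → Fin m => P1 T A g)).filter
        (fun g => phiMap T A g = φ)).card
      ≤ ∑ _φ ∈ PhiGood T A, A.card ^ (T.card - 2 * A.card) * m ^ (n - T.card) :=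
        Finset.sum_le_sum hfiber
    _ = (PhiGood T A).card * (A.card ^ (T.card - 2 * A.card) * m ^ (n - T.card)) := by
        rw [Finset.sum_const, smul_eq_mul]
    _ ≤ Dp T.card A.card * A.card ^ (T.card - 2 * A.card) * m ^ (n - T.card) := by
        have := phiGood_card A T
        calc (PhiGood T A).card * (A.card ^ (T.card - 2 * A.card) * m ^ (n - T.card))
            ≤ Dp T.card A.card * (A.card ^ (T.card - 2 * A.card) * m ^ (n - T.card)) :=
              Nat.mul_le_mul_right _ this
          _ = _ := by ring

end CuckooStash

namespace CuckooStash

open Finset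

variable {n m : ℕ}

def boundN (n m t a b : ℕ) : ℕ :=
  (Dp t a * a ^ (t - 2 * a) * m ^ (n - t)) * (Dp t b * b ^ (t - 2 * b) * m ^ (n - t))

def pairIdx (s t : ℕ) : Finset (ℕ × ℕ) :=
  (Finset.range (t + 1) ×ˢ Finset.range (t + 1)).filter (fun ab => ab.1 + ab.2 + (s + 1) = t)

lemma eset_card_le (T : Finset (Fin n)) (A B : Finset (Fin m)) :
    (Finset.univ.filter (fun hh : (Fin n → Fin m) × (Fin n → Fin m) =>
      P1 T A hh.1 ∧ P1 T B hh.2)).card ≤ boundN n m T.card A.card B.card := by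
  classical
  have hsplit : (Finset.univ.filter (fun hh : (Fin n → Fin m) × (Fin n → Fin m) =>
      P1 T A hh.1 ∧ P1 T B hh.2)) =
      (Finset.univ.filter (fun g => P1 T A g)) ×ˢ (Finset.univ.filter (fun g => P1 T B g)) := by
    rw [← Finset.univ_product_univ, Finset.filter_product]
  rw [hsplit, Finset.card_product]
  exact Nat.mul_le_mul (count_P1 T A) (count_P1 T B)

open Classical in
lemma event_card_le (s : ℕ) :
    (Finset.univ.filter (fun hh : (Fin n → Fin m) × (Fin n → Fin m) =>
      ∃ T : Finset (Fin n), CoreGraph (ends2 hh) T s)).card ≤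
    ∑ t ∈ Finset.range (n + 1), n.choose t *
      ∑ ab ∈ pairIdx s t, m.choose ab.1 * m.choose ab.2 * boundN n m t ab.1 ab.2 := by
  classical
  set Eset : Finset (Fin n) → Finset (Fin m) → Finset (Fin m) →
      Finset ((Fin n → Fin m) × (Fin n → Fin m)) :=
    fun T A B => Finset.univ.filter (fun hh => P1 T A hh.1 ∧ P1 T B hh.2) with hEset
  set BIG : Finset ((Fin n → Fin m) × (Fin n → Fin m)) :=
    (Finset.univ : Finset (Fin n)).powerset.biUnion (fun T =>
      (pairIdx s T.card).biUnion (fun ab =>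
        ((Finset.univ.powersetCard ab.1) ×ˢ (Finset.univ.powersetCard ab.2)).biUnion
          (fun AB => Eset T AB.1 AB.2))) with hBIG
  have hsub : (Finset.univ.filter (fun hh : (Fin n → Fin m) × (Fin n → Fin m) =>
      ∃ T : Finset (Fin n), CoreGraph (ends2 hh) T s)) ⊆ BIG := by
    intro hh hhmem
    obtain ⟨T, hT⟩ := (Finset.mem_filter.1 hhmem).2
    obtain ⟨hf1, hf2, hcard⟩ := core_structure hh T hT
    refine Finset.mem_biUnion.2 ⟨T, Finset.mem_powerset.2 (Finset.subset_univ _), ?_⟩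
    refine Finset.mem_biUnion.2 ⟨((T.image hh.1).card, (T.image hh.2).card), ?_, ?_⟩
    · refine Finset.mem_filter.2 ⟨?_, hcard⟩
      refine Finset.mem_product.2 ⟨?_, ?_⟩ <;> exact Finset.mem_range.2 (by omega)
    · refine Finset.mem_biUnion.2 ⟨(T.image hh.1, T.image hh.2), ?_, ?_⟩
      · refine Finset.mem_product.2 ⟨?_, ?_⟩ <;>
          exact Finset.mem_powersetCard.2 ⟨Finset.subset_univ _, rfl⟩
      · exact Finset.mem_filter.2 ⟨Finset.mem_univ _, ⟨rfl, hf1⟩, ⟨rfl, hf2⟩⟩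
  refine le_trans (Finset.card_le_card hsub) ?_
  refine le_trans (Finset.card_biUnion_le) ?_
  have hperT : ∀ T : Finset (Fin n), T ∈ (Finset.univ : Finset (Fin n)).powerset →
      ((pairIdx s T.card).biUnion (fun ab =>
        ((Finset.univ.powersetCard ab.1) ×ˢ (Finset.univ.powersetCard ab.2)).biUnion
          (fun AB => Eset T AB.1 AB.2))).card ≤
      ∑ ab ∈ pairIdx s T.card, m.choose ab.1 * m.choose ab.2 * boundN n m T.card ab.1 ab.2 := by
    intro T _
    refine le_trans (Finset.card_biUnion_le) ?_
    refine Finset.sum_le_sum ?_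
    intro ab hab
    refine le_trans (Finset.card_biUnion_le) ?_
    have hperAB : ∀ AB ∈ (Finset.univ.powersetCard ab.1) ×ˢ (Finset.univ.powersetCard ab.2),
        (Eset T AB.1 AB.2).card ≤ boundN n m T.card ab.1 ab.2 := by
      intro AB hAB
      rcases Finset.mem_product.1 hAB with ⟨hA, hB⟩
      have ha := (Finset.mem_powersetCard.1 hA).2
      have hb := (Finset.mem_powersetCard.1 hB).2
      rw [← ha, ← hb]
      exact eset_card_le T AB.1 AB.2
    refine le_trans (Finset.sum_le_sum hperAB) ?_
    rw [Finset.sum_const, smul_eq_mul, Finset.card_product, Finset.card_powersetCard,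
      Finset.card_powersetCard]
    simp only [Finset.card_univ, Fintype.card_fin]
    exact le_of_eq (by ring)
  refine le_trans (Finset.sum_le_sum hperT) ?_
  rw [Finset.sum_powerset]
  refine le_of_eq ?_
  simp only [Finset.card_univ, Fintype.card_fin]
  refine Finset.sum_congr rfl ?_
  intro t ht
  have : ∀ T ∈ (Finset.univ : Finset (Fin n)).powersetCard t, (∑ ab ∈ pairIdx s T.card,
      m.choose ab.1 * m.choose ab.2 * boundN n m T.card ab.1 ab.2) =
      ∑ ab ∈ pairIdx s t, m.choose ab.1 * m.choose ab.2 * boundN n m t ab.1 ab.2 := by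
    intro T hT
    rw [(Finset.mem_powersetCard.1 hT).2]
  rw [Finset.sum_congr rfl this, Finset.sum_const, smul_eq_mul, Finset.card_powersetCard]
  simp only [Finset.card_univ, Fintype.card_fin]

end CuckooStash

namespace CuckooStash

open Finset

lemma factorial_add_le (r k : ℕ) : (r + k).factorial ≤ r.factorial * (r + k) ^ k := by
  induction k with
  | zero => simp
  | succ k ih =>
    have h1 : (r + (k+1)).factorial = (r + k + 1) * (r + k).factorial := by
      rw [show r + (k+1) = (r + k) + 1 by ring, Nat.factorial_succ]
    rw [h1]
    calc (r + k + 1) * (r + k).factorial ≤ (r + k + 1) * (r.factorial * (r + k) ^ k) :=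
          Nat.mul_le_mul_left _ ih
      _ ≤ (r + (k+1)) * (r.factorial * (r + (k+1)) ^ k) := by
          refine Nat.mul_le_mul (by omega) (Nat.mul_le_mul_left _ (Nat.pow_le_pow_left (by omega) _))
      _ = r.factorial * (r + (k+1)) ^ (k + 1) := by ring

lemma choose_le_two_pow (N a : ℕ) : N.choose a ≤ 2 ^ N := by
  rcases le_or_gt a N with h | h
  · calc N.choose a ≤ ∑ k ∈ Finset.range (N + 1), N.choose k :=
        Finset.single_le_sum (fun k _ => Nat.zero_le _) (Finset.mem_range.2 (by omega))
    _ = 2 ^ N := Nat.sum_range_choose N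
  · rw [Nat.choose_eq_zero_of_lt h]
    exact Nat.zero_le _

lemma choose_mul_factorial_le (n t : ℕ) : n.choose t * t.factorial ≤ n ^ t := by
  rw [mul_comm, ← Nat.descFactorial_eq_factorial_mul_choose]
  exact Nat.descFactorial_le_pow n t

lemma core_count (s n m t a b : ℕ) (hab : a + b + (s + 1) = t) :
    n.choose t * m.choose a * m.choose b * Dp t a * Dp t b * (a ^ (t - 2*a) * b ^ (t - 2*b)) ≤
    n ^ t * m ^ (t - s - 1) * t ^ (3*s + 3) := by
  by_cases hcase : 2*a ≤ t ∧ 2*b ≤ t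
  · obtain ⟨ha2, hb2⟩ := hcase
    set i := t - 2*a with hi
    set j := t - 2*b with hj
    have hij : i + j = 2*s + 2 := by omega
    have hab' : a + b = t - s - 1 := by omega
    have hX : 0 < t.factorial * a.factorial * b.factorial * i.factorial * j.factorial * 2^(a+b) :=
      by positivity
    refine Nat.le_of_mul_le_mul_right ?_ hX
    have e1 : n.choose t * m.choose a * m.choose b * Dp t a * Dp t b *
        (a ^ i * b ^ j) * (t.factorial * a.factorial * b.factorial * i.factorial *
          j.factorial * 2^(a+b)) =
        (n.choose t * t.factorial) * ((m.choose a * a.factorial) * ((m.choose b * b.factorial) *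
          ((Dp t a * 2^a * i.factorial) * ((Dp t b * 2^b * j.factorial) *
            (a ^ i * b ^ j))))) := by
      rw [pow_add]
      ring
    rw [e1]
    have f1 := choose_mul_factorial_le n t
    have f2 := choose_mul_factorial_le m a
    have f3 := choose_mul_factorial_le m b
    have f4 : Dp t a * 2^a * i.factorial ≤ t.factorial := by
      rw [hi]; exact dp_mul_le_factorial a t
    have f5 : Dp t b * 2^b * j.factorial ≤ t.factorial := by
      rw [hj]; exact dp_mul_le_factorial b t
    have f6 : a ^ i * b ^ j ≤ t ^ (2*s + 2) := by
      calc a ^ i * b ^ j ≤ t ^ i * t ^ j :=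
            Nat.mul_le_mul (Nat.pow_le_pow_left (by omega) _) (Nat.pow_le_pow_left (by omega) _)
        _ = t ^ (i + j) := (pow_add t i j).symm
        _ = t ^ (2*s + 2) := by rw [hij]
    have step1 : (n.choose t * t.factorial) * ((m.choose a * a.factorial) *
        ((m.choose b * b.factorial) * ((Dp t a * 2^a * i.factorial) *
          ((Dp t b * 2^b * j.factorial) * (a ^ i * b ^ j))))) ≤
        n ^ t * (m ^ a * (m ^ b * (t.factorial * (t.factorial * t ^ (2*s + 2))))) := by
      exact Nat.mul_le_mul f1 (Nat.mul_le_mul f2 (Nat.mul_le_mul f3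
        (Nat.mul_le_mul f4 (Nat.mul_le_mul f5 f6))))
    refine le_trans step1 ?_
    -- now pure arithmetic: n^t * m^a * m^b * t! * t! * t^(2s+2) ≤ RHS * X
    have f7 : t.factorial ≤ (a + b).factorial * t ^ (s + 1) := by
      have := factorial_add_le (a + b) (s + 1)
      rwa [show a + b + (s + 1) = t from hab] at this
    have f8 : (a + b).factorial ≤ 2^(a+b) * (a.factorial * b.factorial) := by
      have h1 : (a+b).choose a * a.factorial * b.factorial = (a+b).factorial := by
        have := Nat.choose_mul_factorial_mul_factorial (Nat.le_add_right a b)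
        rwa [Nat.add_sub_cancel_left] at this
      rw [← h1]
      have h2 : (a+b).choose a ≤ 2^(a+b) := choose_le_two_pow _ _
      calc (a+b).choose a * a.factorial * b.factorial
          ≤ 2^(a+b) * a.factorial * b.factorial :=
            Nat.mul_le_mul_right _ (Nat.mul_le_mul_right _ h2)
        _ = 2^(a+b) * (a.factorial * b.factorial) := by ring
    have f9 : t.factorial * t ^ (2*s+2) ≤
        (2^(a+b) * (a.factorial * b.factorial) * t ^ (s+1)) * t ^ (2*s+2) := by
      refine Nat.mul_le_mul_right _ ?_
      exact le_trans f7 (Nat.mul_le_mul_right _ f8)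
    have f10 : 1 ≤ i.factorial * j.factorial := Nat.one_le_iff_ne_zero.2 (by positivity)
    have em : m ^ a * m ^ b = m ^ (t - s - 1) := by
      rw [← pow_add, hab']
    calc n ^ t * (m ^ a * (m ^ b * (t.factorial * (t.factorial * t ^ (2*s + 2)))))
        ≤ n ^ t * (m ^ a * (m ^ b * (t.factorial *
            ((2^(a+b) * (a.factorial * b.factorial) * t ^ (s+1)) * t ^ (2*s+2))))) := by
          exact Nat.mul_le_mul_left _ (Nat.mul_le_mul_left _ (Nat.mul_le_mul_left _
            (Nat.mul_le_mul_left _ f9)))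
      _ = (n ^ t * (m ^ a * m ^ b) * t ^ (3*s+3)) *
            (t.factorial * a.factorial * b.factorial * 1 * 2^(a+b)) := by
          rw [show (3*s+3) = (s+1) + (2*s+2) by ring, pow_add]
          ring
      _ ≤ (n ^ t * (m ^ a * m ^ b) * t ^ (3*s+3)) *
            (t.factorial * a.factorial * b.factorial * (i.factorial * j.factorial) * 2^(a+b)) := by
          refine Nat.mul_le_mul_left _ ?_
          refine Nat.mul_le_mul_right _ ?_
          refine Nat.mul_le_mul_left _ f10
      _ = n ^ t * (m ^ a * m ^ b) * t ^ (3*s+3) *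
            (t.factorial * a.factorial * b.factorial * i.factorial * j.factorial * 2^(a+b)) := by
          ring
      _ = n ^ t * m ^ (t - s - 1) * t ^ (3*s + 3) *
            (t.factorial * a.factorial * b.factorial * i.factorial * j.factorial * 2^(a+b)) := by
          rw [em]
  · rcases Decidable.not_and_iff_or_not.1 hcase with hcl | hcl
    · rw [dp_eq_zero (by omega : t < 2*a)]
      simp
    · rw [dp_eq_zero (by omega : t < 2*b)]
      simp

lemma pairIdx_card_le (s t : ℕ) : (pairIdx s t).card ≤ (t+1) * (t+1) := by
  calc (pairIdx s t).card ≤ ((Finset.range (t + 1)) ×ˢ (Finset.range (t + 1))).card :=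
      Finset.card_le_card (Finset.filter_subset _ _)
    _ = (t+1) * (t+1) := by simp [Finset.card_product]

lemma pairIdx_empty {s t : ℕ} (h : t < s + 1) : pairIdx s t = ∅ := by
  rw [Finset.eq_empty_iff_forall_notMem]
  intro ab hab
  have := (Finset.mem_filter.1 hab).2
  omega

lemma perT_bound (s n m t : ℕ) :
    n.choose t * ∑ ab ∈ pairIdx s t, m.choose ab.1 * m.choose ab.2 * boundN n m t ab.1 ab.2 ≤
    (t+1) * (t+1) * (n ^ t * m ^ (t - s - 1) * t ^ (3*s + 3) * (m ^ (n - t) * m ^ (n - t))) := by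
  rw [Finset.mul_sum]
  have hterm : ∀ ab ∈ pairIdx s t,
      n.choose t * (m.choose ab.1 * m.choose ab.2 * boundN n m t ab.1 ab.2) ≤
      n ^ t * m ^ (t - s - 1) * t ^ (3*s + 3) * (m ^ (n - t) * m ^ (n - t)) := by
    intro ab hab
    have habeq : ab.1 + ab.2 + (s + 1) = t := (Finset.mem_filter.1 hab).2
    have hcore := core_count s n m t ab.1 ab.2 habeq
    have e1 : n.choose t * (m.choose ab.1 * m.choose ab.2 * boundN n m t ab.1 ab.2) =
        (n.choose t * m.choose ab.1 * m.choose ab.2 * Dp t ab.1 * Dp t ab.2 *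
          (ab.1 ^ (t - 2*ab.1) * ab.2 ^ (t - 2*ab.2))) * (m ^ (n - t) * m ^ (n - t)) := by
      unfold boundN
      ring
    rw [e1]
    exact Nat.mul_le_mul_right _ hcore
  calc ∑ ab ∈ pairIdx s t, n.choose t * (m.choose ab.1 * m.choose ab.2 * boundN n m t ab.1 ab.2)
      ≤ ∑ _ab ∈ pairIdx s t,
          n ^ t * m ^ (t - s - 1) * t ^ (3*s + 3) * (m ^ (n - t) * m ^ (n - t)) :=
        Finset.sum_le_sum hterm
    _ = (pairIdx s t).card * (n ^ t * m ^ (t - s - 1) * t ^ (3*s + 3) *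
          (m ^ (n - t) * m ^ (n - t))) := by rw [Finset.sum_const, smul_eq_mul]
    _ ≤ _ := Nat.mul_le_mul_right _ (pairIdx_card_le s t)

end CuckooStash

namespace CuckooStash

open Finset

lemma geom_tail_bound (D : ℕ) {ρ : ℝ} (h0 : 0 < ρ) (h1 : ρ < 1) :
    ∃ Cs : ℝ, 0 < Cs ∧ ∀ N : ℕ, ∑ t ∈ Finset.range N, ((t : ℝ) + 1) ^ D * ρ ^ t ≤ Cs := by
  have hsumm : Summable (fun u : ℕ => (u : ℝ) ^ D * ρ ^ u) :=
    summable_pow_mul_geometric_of_norm_lt_one D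
      (by rw [Real.norm_eq_abs, abs_of_pos h0]; exact h1)
  have htsum0 : 0 ≤ ∑' u : ℕ, (u : ℝ) ^ D * ρ ^ u :=
    tsum_nonneg (fun u => by positivity)
  refine ⟨(1/ρ) * (∑' u : ℕ, (u : ℝ) ^ D * ρ ^ u) + 1, by positivity, ?_⟩
  intro N
  have key : ∑ t ∈ Finset.range N, ((t : ℝ) + 1) ^ D * ρ ^ t
      = (1/ρ) * ∑ t ∈ Finset.range N, (((t+1 : ℕ) : ℝ)) ^ D * ρ ^ (t+1) := by
    rw [Finset.mul_sum]
    refine Finset.sum_congr rfl ?_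
    intro t _
    have hρ : ρ ≠ 0 := ne_of_gt h0
    push_cast
    rw [pow_succ]
    field_simp
  rw [key]
  have hshift : ∑ t ∈ Finset.range N, (((t+1 : ℕ) : ℝ)) ^ D * ρ ^ (t+1)
      ≤ ∑' u : ℕ, (u : ℝ) ^ D * ρ ^ u := by
    have himg : ∑ t ∈ Finset.range N, (((t+1 : ℕ) : ℝ)) ^ D * ρ ^ (t+1)
        = ∑ u ∈ (Finset.range N).image (fun x : ℕ => x + 1), (u : ℝ) ^ D * ρ ^ u := by
      exact (Finset.sum_image (f := fun u : ℕ => (u : ℝ) ^ D * ρ ^ u)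
        (g := fun x : ℕ => x + 1) (fun x _ y _ h => by simpa using h)).symm
    rw [himg]
    exact Summable.sum_le_tsum _ (fun u _ => by positivity) hsumm
  calc (1/ρ) * ∑ t ∈ Finset.range N, (((t+1 : ℕ) : ℝ)) ^ D * ρ ^ (t+1)
      ≤ (1/ρ) * (∑' u : ℕ, (u : ℝ) ^ D * ρ ^ u) := by
        refine mul_le_mul_of_nonneg_left hshift (by positivity)
    _ ≤ (1/ρ) * (∑' u : ℕ, (u : ℝ) ^ D * ρ ^ u) + 1 := by linarith

end CuckooStash


open Classical in
/-- For fully random hash functions `h₁, h₂ : S → [m]` with `m ≥ (1+ε)n` and `|S| = n`,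
the probability that some subset `T ⊆ S` spans an excess-`(s+1)` core graph in the
cuckoo graph is `O(1/n^(s+1))`; moreover the counting estimate
`∑_{t=s+3}^{n} C(n,t) · 2^(s+1) · m^(t-s-1) · t! · t^C / m^(2t) = O(1/n^(s+1))`
holds for every constant exponent `C` (playing the role of `t^{O(s)}`). -/
theorem stmt_16 (ε : ℝ) (hε : 0 < ε) (s C : ℕ) :
    ∃ K : ℝ, 0 < K ∧ ∀ n m : ℕ, 1 ≤ n → (1 + ε) * (n : ℝ) ≤ (m : ℝ) →
      (((Finset.univ.filter (fun hh : (Fin n → Fin m) × (Fin n → Fin m) =>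
            ∃ T : Finset (Fin n),
              CoreGraph (fun x : Fin n =>
                ((Sum.inl (hh.1 x) : Fin m ⊕ Fin m),
                 (Sum.inr (hh.2 x) : Fin m ⊕ Fin m))) T s)).card : ℝ)
          / ((m : ℝ) ^ n * (m : ℝ) ^ n)
        ≤ K / (n : ℝ) ^ (s + 1)) ∧
      (∑ t ∈ Finset.Icc (s + 3) n,
          (n.choose t : ℝ) * 2 ^ (s + 1) * (m : ℝ) ^ (t - s - 1)
            * (Nat.factorial t : ℝ) * (t : ℝ) ^ C / (m : ℝ) ^ (2 * t)
        ≤ K / (n : ℝ) ^ (s + 1)) := by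
  classical
  have hε1 : (0:ℝ) < 1 + ε := by linarith
  have hρ0 : (0:ℝ) < 1/(1+ε) := by positivity
  have hρ1 : 1/(1+ε) < 1 := by
    rw [div_lt_one hε1]; linarith
  obtain ⟨C1s, hC1pos, hC1⟩ := geom_tail_bound (3*s+5) hρ0 hρ1
  obtain ⟨C2s, hC2pos, hC2⟩ := geom_tail_bound C hρ0 hρ1
  refine ⟨C1s + 2^(s+1) * C2s, by positivity, ?_⟩
  intro n m hn hm
  set ρ : ℝ := 1/(1+ε) with hρdef
  have hnR : (1:ℝ) ≤ (n:ℝ) := by exact_mod_cast hn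
  have hnpos : (0:ℝ) < (n:ℝ) := by linarith
  have hmR : (0:ℝ) < (m:ℝ) := by nlinarith
  have hnm : (n:ℝ) ≤ (m:ℝ) := by nlinarith
  have hq : (n:ℝ)/(m:ℝ) ≤ ρ := by
    rw [hρdef, div_le_div_iff₀ hmR hε1]
    nlinarith
  have hKden : (0:ℝ) < (n:ℝ)^(s+1) := by positivity
  have hmn2 : (0:ℝ) < (m:ℝ)^n * (m:ℝ)^n := by positivity
  have hshared : ∀ t : ℕ, (n:ℝ)^t * (n:ℝ)^(s+1) ≤ ρ^t * (m:ℝ)^(t+s+1) := by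
    intro t
    have h1 : (n:ℝ)^t ≤ ρ^t * (m:ℝ)^t := by
      have h2 : ((n:ℝ)/(m:ℝ))^t ≤ ρ^t := pow_le_pow_left₀ (by positivity) hq t
      rw [div_pow] at h2
      calc (n:ℝ)^t = ((n:ℝ)^t/(m:ℝ)^t) * (m:ℝ)^t := by field_simp
        _ ≤ ρ^t * (m:ℝ)^t := by
            refine mul_le_mul_of_nonneg_right h2 (by positivity)
    have h3 : (n:ℝ)^(s+1) ≤ (m:ℝ)^(s+1) := pow_le_pow_left₀ (by positivity) hnm _
    calc (n:ℝ)^t * (n:ℝ)^(s+1) ≤ (ρ^t * (m:ℝ)^t) * (m:ℝ)^(s+1) := by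
          refine mul_le_mul h1 h3 (by positivity) (by positivity)
      _ = ρ^t * (m:ℝ)^(t+s+1) := by rw [show t+s+1 = t+(s+1) by omega, pow_add]; ring
  constructor
  · -- probability bound
    have h0 := event_card_le (n := n) (m := m) s
    have h1 : ((Finset.univ.filter (fun hh : (Fin n → Fin m) × (Fin n → Fin m) =>
          ∃ T : Finset (Fin n),
            CoreGraph (fun x : Fin n =>
              ((Sum.inl (hh.1 x) : Fin m ⊕ Fin m),
               (Sum.inr (hh.2 x) : Fin m ⊕ Fin m))) T s)).card : ℝ) ≤
        ∑ t ∈ Finset.range (n+1), ((n.choose t *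
          ∑ ab ∈ pairIdx s t, m.choose ab.1 * m.choose ab.2 * boundN n m t ab.1 ab.2 : ℕ) : ℝ) := by
      exact_mod_cast h0
    have hper : ∀ t ∈ Finset.range (n+1),
        ((n.choose t * ∑ ab ∈ pairIdx s t,
          m.choose ab.1 * m.choose ab.2 * boundN n m t ab.1 ab.2 : ℕ) : ℝ)
          / ((m:ℝ)^n * (m:ℝ)^n)
        ≤ ((t:ℝ)+1)^(3*s+5) * ρ^t / (n:ℝ)^(s+1) := by
      intro t ht
      by_cases hts : t ≤ s
      · rw [pairIdx_empty (by omega)]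
        simp only [Finset.sum_empty, Nat.mul_zero, Nat.cast_zero, zero_div]
        positivity
      · push_neg at hts
        have htn : t ≤ n := by
          have := Finset.mem_range.1 ht; omega
        have hpow : (m:ℝ)^(t-s-1) * ((m:ℝ)^(n-t) * (m:ℝ)^(n-t)) * (m:ℝ)^(t+s+1)
            = (m:ℝ)^n * (m:ℝ)^n := by
          rw [← pow_add, ← pow_add, ← pow_add, ← pow_add]
          congr 1
          omega
        have hNle := perT_bound s n m t
        calc ((n.choose t * ∑ ab ∈ pairIdx s t,
              m.choose ab.1 * m.choose ab.2 * boundN n m t ab.1 ab.2 : ℕ) : ℝ)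
              / ((m:ℝ)^n * (m:ℝ)^n)
            ≤ (((t+1) * (t+1) * (n ^ t * m ^ (t - s - 1) * t ^ (3*s + 3) *
                (m ^ (n - t) * m ^ (n - t))) : ℕ) : ℝ) / ((m:ℝ)^n * (m:ℝ)^n) := by
              have hNleR : ((n.choose t * ∑ ab ∈ pairIdx s t,
                  m.choose ab.1 * m.choose ab.2 * boundN n m t ab.1 ab.2 : ℕ) : ℝ) ≤
                  (((t+1) * (t+1) * (n ^ t * m ^ (t - s - 1) * t ^ (3*s + 3) *
                  (m ^ (n - t) * m ^ (n - t))) : ℕ) : ℝ) := by exact_mod_cast hNle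
              gcongr
          _ ≤ ((t:ℝ)+1)^(3*s+5) * ρ^t / (n:ℝ)^(s+1) := by
              rw [div_le_div_iff₀ hmn2 hKden]
              push_cast
              calc ((t:ℝ)+1) * ((t:ℝ)+1) * ((n:ℝ)^t * (m:ℝ)^(t-s-1) * (t:ℝ)^(3*s+3) *
                    ((m:ℝ)^(n-t) * (m:ℝ)^(n-t))) * (n:ℝ)^(s+1)
                  = (((t:ℝ)+1) * ((t:ℝ)+1) * (t:ℝ)^(3*s+3)) *
                    ((m:ℝ)^(t-s-1) * ((m:ℝ)^(n-t) * (m:ℝ)^(n-t))) *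
                    ((n:ℝ)^t * (n:ℝ)^(s+1)) := by ring
                _ ≤ (((t:ℝ)+1) * ((t:ℝ)+1) * ((t:ℝ)+1)^(3*s+3)) *
                    ((m:ℝ)^(t-s-1) * ((m:ℝ)^(n-t) * (m:ℝ)^(n-t))) *
                    (ρ^t * (m:ℝ)^(t+s+1)) := by
                      have g1 : (t:ℝ)^(3*s+3) ≤ ((t:ℝ)+1)^(3*s+3) :=
                        pow_le_pow_left₀ (by positivity) (by linarith) _
                      have g2 := hshared t
                      gcongr <;> positivity
                _ = ((t:ℝ)+1)^(3*s+5) * ρ^t * ((m:ℝ)^(t-s-1) *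
                      ((m:ℝ)^(n-t) * (m:ℝ)^(n-t)) * (m:ℝ)^(t+s+1)) := by
                      rw [show 3*s+5 = (3*s+3)+2 by omega, pow_add]
                      ring
                _ = ((t:ℝ)+1)^(3*s+5) * ρ^t * ((m:ℝ)^n * (m:ℝ)^n) := by rw [hpow]
    calc ((Finset.univ.filter (fun hh : (Fin n → Fin m) × (Fin n → Fin m) =>
            ∃ T : Finset (Fin n),
              CoreGraph (fun x : Fin n =>
                ((Sum.inl (hh.1 x) : Fin m ⊕ Fin m),
                 (Sum.inr (hh.2 x) : Fin m ⊕ Fin m))) T s)).card : ℝ)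
          / ((m : ℝ) ^ n * (m : ℝ) ^ n)
        ≤ (∑ t ∈ Finset.range (n+1), ((n.choose t *
            ∑ ab ∈ pairIdx s t, m.choose ab.1 * m.choose ab.2 * boundN n m t ab.1 ab.2 : ℕ) : ℝ))
            / ((m:ℝ)^n * (m:ℝ)^n) := by
          gcongr
      _ = ∑ t ∈ Finset.range (n+1), ((n.choose t *
            ∑ ab ∈ pairIdx s t, m.choose ab.1 * m.choose ab.2 * boundN n m t ab.1 ab.2 : ℕ) : ℝ)
            / ((m:ℝ)^n * (m:ℝ)^n) := Finset.sum_div _ _ _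
      _ ≤ ∑ t ∈ Finset.range (n+1), ((t:ℝ)+1)^(3*s+5) * ρ^t / (n:ℝ)^(s+1) :=
          Finset.sum_le_sum hper
      _ = (∑ t ∈ Finset.range (n+1), ((t:ℝ)+1)^(3*s+5) * ρ^t) / (n:ℝ)^(s+1) :=
          (Finset.sum_div _ _ _).symm
      _ ≤ C1s / (n:ℝ)^(s+1) := by
          gcongr
          exact hC1 (n+1)
      _ ≤ (C1s + 2^(s+1) * C2s) / (n:ℝ)^(s+1) := by
          have hgg : (0:ℝ) ≤ 2^(s+1) * C2s := by positivity
          gcongr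
          linarith
  · -- counting estimate
    have hper2 : ∀ t ∈ Finset.Icc (s+3) n,
        (n.choose t : ℝ) * 2 ^ (s + 1) * (m : ℝ) ^ (t - s - 1)
            * (Nat.factorial t : ℝ) * (t : ℝ) ^ C / (m : ℝ) ^ (2 * t)
        ≤ 2^(s+1) * (((t:ℝ)+1)^C * ρ^t) / (n:ℝ)^(s+1) := by
      intro t ht
      rcases Finset.mem_Icc.1 ht with ⟨hts, htn⟩
      have hm2t : (0:ℝ) < (m:ℝ)^(2*t) := by positivity
      rw [div_le_div_iff₀ hm2t hKden]
      have f1 : (n.choose t : ℝ) * (Nat.factorial t : ℝ) ≤ (n:ℝ)^t := by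
        exact_mod_cast choose_mul_factorial_le n t
      have f2 : (t:ℝ)^C ≤ ((t:ℝ)+1)^C := pow_le_pow_left₀ (by positivity) (by linarith) _
      have f3 := hshared t
      calc (n.choose t : ℝ) * 2 ^ (s + 1) * (m : ℝ) ^ (t - s - 1)
            * (Nat.factorial t : ℝ) * (t : ℝ) ^ C * (n:ℝ)^(s+1)
          = 2^(s+1) * (t:ℝ)^C * (m:ℝ)^(t-s-1) *
              (((n.choose t : ℝ) * (Nat.factorial t : ℝ)) * (n:ℝ)^(s+1)) := by ring
        _ ≤ 2^(s+1) * ((t:ℝ)+1)^C * (m:ℝ)^(t-s-1) * ((n:ℝ)^t * (n:ℝ)^(s+1)) := by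
            gcongr <;> positivity
        _ ≤ 2^(s+1) * ((t:ℝ)+1)^C * (m:ℝ)^(t-s-1) * (ρ^t * (m:ℝ)^(t+s+1)) := by
            gcongr <;> positivity
        _ = 2^(s+1) * (((t:ℝ)+1)^C * ρ^t) * ((m:ℝ)^(t-s-1) * (m:ℝ)^(t+s+1)) := by ring
        _ = 2^(s+1) * (((t:ℝ)+1)^C * ρ^t) * (m:ℝ)^(2*t) := by
            rw [← pow_add]
            congr 2
            omega
    calc ∑ t ∈ Finset.Icc (s + 3) n,
          (n.choose t : ℝ) * 2 ^ (s + 1) * (m : ℝ) ^ (t - s - 1)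
            * (Nat.factorial t : ℝ) * (t : ℝ) ^ C / (m : ℝ) ^ (2 * t)
        ≤ ∑ t ∈ Finset.Icc (s + 3) n, 2^(s+1) * (((t:ℝ)+1)^C * ρ^t) / (n:ℝ)^(s+1) :=
          Finset.sum_le_sum hper2
      _ ≤ ∑ t ∈ Finset.range (n+1), 2^(s+1) * (((t:ℝ)+1)^C * ρ^t) / (n:ℝ)^(s+1) := by
          refine Finset.sum_le_sum_of_subset_of_nonneg ?_ ?_
          · intro t ht
            rcases Finset.mem_Icc.1 ht with ⟨-, h2⟩
            exact Finset.mem_range.2 (by omega)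
          · intro t _ _
            positivity
      _ = (2^(s+1) * ∑ t ∈ Finset.range (n+1), ((t:ℝ)+1)^C * ρ^t) / (n:ℝ)^(s+1) := by
          rw [Finset.mul_sum, Finset.sum_div]
      _ ≤ (2^(s+1) * C2s) / (n:ℝ)^(s+1) := by
          gcongr
          exact hC2 (n+1)
      _ ≤ (C1s + 2^(s+1) * C2s) / (n:ℝ)^(s+1) := by
          gcongr
          linarith
end

section
/- The series Σ_{t≥1} t^C / (1+ε)^t converges for every constant C ≥ 0 and ε > 0; consequently Σ_{t=2k}^{n} C(n,t) · (t! · t^C / m^{t-1}) · (t²/ℓ)^{ck} = O(n/ℓ^{ck}) when m ≥ (1+ε)n. -/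
/-- The series `∑_{t≥1} t^C / (1+ε)^t` converges for every constant `C ≥ 0` and
`ε > 0`; consequently, for constants `c, k ≥ 1`,
`∑_{t=2k}^{n} C(n,t) · t! · t^C / m^(t-1) · (t²/ℓ)^(ck) = O(n/ℓ^(ck))`
whenever `m ≥ (1+ε)n` (the constant `K` depends only on `C, c, k, ε`). -/
theorem stmt_17 (C c k : ℕ) (hc : 1 ≤ c) (hk : 1 ≤ k) (ε : ℝ) (hε : 0 < ε) :
    Summable (fun t : ℕ => (t : ℝ) ^ C / (1 + ε) ^ t) ∧
    ∃ K : ℝ, 0 < K ∧ ∀ n m ℓ : ℕ, 1 ≤ n → 1 ≤ ℓ → (1 + ε) * (n : ℝ) ≤ (m : ℝ) →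
      ∑ t ∈ Finset.Icc (2 * k) n,
          (n.choose t : ℝ) * (Nat.factorial t : ℝ) * (t : ℝ) ^ C / (m : ℝ) ^ (t - 1)
            * ((t : ℝ) ^ 2 / (ℓ : ℝ)) ^ (c * k)
        ≤ K * (n : ℝ) / (ℓ : ℝ) ^ (c * k) := by
  have h1ε : (0:ℝ) < 1 + ε := by linarith
  set r : ℝ := (1 + ε)⁻¹ with hrdef
  have hr0 : 0 < r := inv_pos.2 h1ε
  have hr1 : r < 1 := by
    rw [hrdef, inv_lt_one_iff₀]; right; linarith
  have hrnorm : ‖r‖ < 1 := by rw [Real.norm_eq_abs, abs_of_pos hr0]; exact hr1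
  have hsum : ∀ D : ℕ, Summable (fun t : ℕ => (t : ℝ) ^ D * r ^ t) := fun D =>
    summable_pow_mul_geometric_of_norm_lt_one D hrnorm
  constructor
  · have := hsum C
    simp only [hrdef, inv_pow] at this
    simpa [div_eq_mul_inv] using this
  · set D := C + 2 * (c * k) with hD
    set S := ∑' t : ℕ, (t : ℝ) ^ D * r ^ t with hS
    have hS0 : 0 ≤ S := tsum_nonneg fun t => by positivity
    refine ⟨(1 + ε) * S + 1, by positivity, fun n m ℓ hn hℓ hm => ?_⟩
    have hn0 : (0:ℝ) < n := by exact_mod_cast hn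
    have hℓ0 : (0:ℝ) < ℓ := by exact_mod_cast hℓ
    have hm0 : (0:ℝ) < m := lt_of_lt_of_le (by nlinarith) hm
    have hnm : (n : ℝ) ≤ m * r := by
      rw [hrdef, ← div_eq_mul_inv, le_div_iff₀ h1ε]
      linarith
    -- per-term bound
    have key : ∀ t ∈ Finset.Icc (2 * k) n,
        (n.choose t : ℝ) * (Nat.factorial t : ℝ) * (t : ℝ) ^ C / (m : ℝ) ^ (t - 1)
            * ((t : ℝ) ^ 2 / (ℓ : ℝ)) ^ (c * k)
          ≤ ((1 + ε) * ((t : ℝ) ^ D * r ^ t)) * ((n : ℝ) / (ℓ : ℝ) ^ (c * k)) := by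
      intro t ht
      simp only [Finset.mem_Icc] at ht
      have ht1 : 1 ≤ t := le_trans (by omega) ht.1
      have hcf : (n.choose t : ℝ) * (Nat.factorial t : ℝ) ≤ (n : ℝ) ^ t := by
        have := Nat.descFactorial_le_pow n t
        rw [Nat.descFactorial_eq_factorial_mul_choose] at this
        push_cast
        calc (n.choose t : ℝ) * (t.factorial : ℝ) = ((t.factorial * n.choose t : ℕ) : ℝ) := by
              push_cast; ring
          _ ≤ ((n ^ t : ℕ) : ℝ) := by exact_mod_cast this
          _ = (n : ℝ) ^ t := by push_cast; try ring
      have hfrac : (n.choose t : ℝ) * (Nat.factorial t : ℝ) / (m : ℝ) ^ (t - 1)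
          ≤ (n : ℝ) * r ^ (t - 1) := by
        rw [div_le_iff₀ (by positivity)]
        calc (n.choose t : ℝ) * (Nat.factorial t : ℝ) ≤ (n : ℝ) ^ t := hcf
          _ = (n : ℝ) * (n : ℝ) ^ (t - 1) := by
              rw [← pow_succ']; congr 1; omega
          _ ≤ (n : ℝ) * (m * r) ^ (t - 1) := by
              gcongr <;> first | exact hn0.le | rfl
          _ = (n : ℝ) * r ^ (t - 1) * (m : ℝ) ^ (t - 1) := by
              rw [mul_pow]; ring
      have hrt : r ^ (t - 1) = (1 + ε) * r ^ t := by
        have ht' : t = (t - 1) + 1 := by omega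
        conv_rhs => rw [ht', pow_succ]
        rw [hrdef]
        field_simp
      have hpow2 : ((t : ℝ) ^ 2 / (ℓ : ℝ)) ^ (c * k)
          = (t : ℝ) ^ (2 * (c * k)) / (ℓ : ℝ) ^ (c * k) := by
        rw [div_pow, ← pow_mul]
      rw [hpow2]
      have hDsplit : (t : ℝ) ^ D = (t : ℝ) ^ C * (t : ℝ) ^ (2 * (c * k)) := by
        rw [hD, pow_add]
      calc (n.choose t : ℝ) * (Nat.factorial t : ℝ) * (t : ℝ) ^ C / (m : ℝ) ^ (t - 1)
              * ((t : ℝ) ^ (2 * (c * k)) / (ℓ : ℝ) ^ (c * k))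
          = ((n.choose t : ℝ) * (Nat.factorial t : ℝ) / (m : ℝ) ^ (t - 1))
              * ((t : ℝ) ^ C * (t : ℝ) ^ (2 * (c * k)) / (ℓ : ℝ) ^ (c * k)) := by ring
        _ ≤ ((n : ℝ) * r ^ (t - 1))
              * ((t : ℝ) ^ C * (t : ℝ) ^ (2 * (c * k)) / (ℓ : ℝ) ^ (c * k)) := by
            gcongr
        _ = ((1 + ε) * ((t : ℝ) ^ D * r ^ t)) * ((n : ℝ) / (ℓ : ℝ) ^ (c * k)) := by
            rw [hrt, hDsplit]; ring
    calc ∑ t ∈ Finset.Icc (2 * k) n,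
            (n.choose t : ℝ) * (Nat.factorial t : ℝ) * (t : ℝ) ^ C / (m : ℝ) ^ (t - 1)
              * ((t : ℝ) ^ 2 / (ℓ : ℝ)) ^ (c * k)
        ≤ ∑ t ∈ Finset.Icc (2 * k) n,
            ((1 + ε) * ((t : ℝ) ^ D * r ^ t)) * ((n : ℝ) / (ℓ : ℝ) ^ (c * k)) :=
          Finset.sum_le_sum key
      _ = (1 + ε) * (∑ t ∈ Finset.Icc (2 * k) n, (t : ℝ) ^ D * r ^ t)
            * ((n : ℝ) / (ℓ : ℝ) ^ (c * k)) := by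
          rw [← Finset.sum_mul, ← Finset.mul_sum]
      _ ≤ (1 + ε) * S * ((n : ℝ) / (ℓ : ℝ) ^ (c * k)) := by
          gcongr
          exact Summable.sum_le_tsum _ (fun t _ => by positivity) (hsum D)
      _ ≤ ((1 + ε) * S + 1) * (n : ℝ) / (ℓ : ℝ) ^ (c * k) := by
          rw [mul_div_assoc]
          exact mul_le_mul_of_nonneg_right (by linarith) (by positivity)
end
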